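/- arXiv:2002.09774 — 10 statements merged into one kernel-verified Lean document; each statement's English description precedes it below -/
import Mathlib

section
/- Let f, f^ν, g, g^ν : ℝⁿ → (-∞, ∞] with f^ν epi-converging to f and g^ν epi-converging to g. If additionally -g^ν epi-converges to -g (equivalently g^ν(x^ν) → g(x) whenever x^ν → x), then f^ν + g^ν epi-converges to f + g. -/
open Filter Topology

/-- Inner (Painlevé–Kuratowski) limit of a sequence of sets. -/
def LimInn {α : Type*} [TopologicalSpace α] (C : ℕ → Set α) : Set α :=
  {x | ∃ u : ℕ → α, (∀ᶠ ν in atTop, u ν ∈ C ν) ∧ Tendsto u atTop (𝓝 x)}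

/-- Outer (Painlevé–Kuratowski) limit of a sequence of sets. -/
def LimOut {α : Type*} [TopologicalSpace α] (C : ℕ → Set α) : Set α :=
  {x | ∃ N : ℕ → ℕ, StrictMono N ∧
    ∃ u : ℕ → α, (∀ k, u k ∈ C (N k)) ∧ Tendsto u atTop (𝓝 x)}

/-- Epi-convergence, via the liminf/limsup characterization. -/
def EpiConverges {α : Type*} [TopologicalSpace α]
    (fs : ℕ → α → EReal) (f : α → EReal) : Prop :=
  (∀ x : α, ∀ u : ℕ → α, Tendsto u atTop (𝓝 x) →
      f x ≤ liminf (fun ν => fs ν (u ν)) atTop) ∧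
  (∀ x : α, ∃ u : ℕ → α, Tendsto u atTop (𝓝 x) ∧
      limsup (fun ν => fs ν (u ν)) atTop ≤ f x)
theorem epiConverges_add_of_neg {n : ℕ}
    (f g : (Fin n → ℝ) → EReal) (fs gs : ℕ → (Fin n → ℝ) → EReal)
    (hf' : ∀ x, f x ≠ ⊥) (hg' : ∀ x, g x ≠ ⊥)
    (hfs' : ∀ ν x, fs ν x ≠ ⊥) (hgs' : ∀ ν x, gs ν x ≠ ⊥)
    (hf : EpiConverges fs f) (hg : EpiConverges gs g)
    (hng : EpiConverges (fun ν x => -(gs ν x)) (fun x => -(g x))) :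
    EpiConverges (fun ν x => fs ν x + gs ν x) (fun x => f x + g x) := by
  constructor
  · intro x u hu
    calc f x + g x ≤ liminf (fun ν => fs ν (u ν)) atTop + liminf (fun ν => gs ν (u ν)) atTop :=
          add_le_add (hf.1 x u hu) (hg.1 x u hu)
      _ ≤ liminf ((fun ν => fs ν (u ν)) + (fun ν => gs ν (u ν))) atTop := EReal.le_liminf_add
      _ = liminf (fun ν => fs ν (u ν) + gs ν (u ν)) atTop := rfl
  · intro x
    obtain ⟨u, hu, hlim⟩ := hf.2 x
    refine ⟨u, hu, ?_⟩
    show limsup (fun ν => fs ν (u ν) + gs ν (u ν)) atTop ≤ f x + g x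
    have h1 : g x ≤ liminf (fun ν => gs ν (u ν)) atTop := hg.1 x u hu
    have h2 : limsup (fun ν => gs ν (u ν)) atTop ≤ g x := by
      have := hng.1 x u hu
      have hneg : liminf (-(fun ν => gs ν (u ν))) atTop = - limsup (fun ν => gs ν (u ν)) atTop :=
        EReal.liminf_neg
      rw [show (fun ν => -(gs ν (u ν))) = -(fun ν => gs ν (u ν)) from rfl, hneg] at this
      exact EReal.neg_le_neg_iff.mp (by simpa using this)
    by_cases hgx : g x = ⊤
    · rw [hgx, EReal.add_top_of_ne_bot (hf' x)]
      exact le_top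
    · have hns : limsup (fun ν => gs ν (u ν)) atTop ≠ ⊤ := fun h => hgx (top_le_iff.mp (h ▸ h2))
      have hnb : limsup (fun ν => gs ν (u ν)) atTop ≠ ⊥ := fun h => hg' x (le_bot_iff.mp (h ▸ h1.trans liminf_le_limsup))
      calc limsup (fun ν => fs ν (u ν) + gs ν (u ν)) atTop
          = limsup ((fun ν => fs ν (u ν)) + (fun ν => gs ν (u ν))) atTop := rfl
        _ ≤ limsup (fun ν => fs ν (u ν)) atTop + limsup (fun ν => gs ν (u ν)) atTop :=
            EReal.limsup_add_le (.inr hns) (.inr hnb)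
        _ ≤ f x + g x := add_le_add hlim h2
end

section
/- Let f, f^ν, g, g^ν : ℝⁿ → (-∞, ∞] with f^ν epi-converging to f, g^ν epi-converging to g, and suppose f^ν(x) → f(x) and g^ν(x) → g(x) pointwise for every x ∈ ℝⁿ. Then f^ν + g^ν epi-converges to f + g. -/
open Filter Topology

theorem epiConverges_add_of_pointwise {n : ℕ}
    (f g : (Fin n → ℝ) → EReal) (fs gs : ℕ → (Fin n → ℝ) → EReal)
    (hf' : ∀ x, f x ≠ ⊥) (hg' : ∀ x, g x ≠ ⊥)
    (hfs' : ∀ ν x, fs ν x ≠ ⊥) (hgs' : ∀ ν x, gs ν x ≠ ⊥)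
    (hf : EpiConverges fs f) (hg : EpiConverges gs g)
    (hfp : ∀ x, Tendsto (fun ν => fs ν x) atTop (𝓝 (f x)))
    (hgp : ∀ x, Tendsto (fun ν => gs ν x) atTop (𝓝 (g x))) :
    EpiConverges (fun ν x => fs ν x + gs ν x) (fun x => f x + g x) := by
  constructor
  · intro x u hu
    calc f x + g x ≤ liminf (fun ν => fs ν (u ν)) atTop + liminf (fun ν => gs ν (u ν)) atTop :=
          add_le_add (hf.1 x u hu) (hg.1 x u hu)
      _ ≤ liminf ((fun ν => fs ν (u ν)) + fun ν => gs ν (u ν)) atTop := EReal.le_liminf_add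
      _ = liminf (fun ν => fs ν (u ν) + gs ν (u ν)) atTop := rfl
  · intro x
    refine ⟨fun _ => x, tendsto_const_nhds, ?_⟩
    have : Tendsto (fun ν => fs ν x + gs ν x) atTop (𝓝 (f x + g x)) := by
      have hc : ContinuousAt (fun p : EReal × EReal => p.1 + p.2) (f x, g x) :=
        EReal.continuousAt_add (Or.inr (hg' x)) (Or.inl (hf' x))
      exact hc.tendsto.comp ((hfp x).prodMk_nhds (hgp x))
    exact this.limsup_eq.le
end

section
/- Let h, h^ν : ℝ → ℝ ∪ {±∞} with h^ν epi-converging to h and h^ν(α) → h(α) for all α ∈ ℝ, and let f : ℝⁿ → ℝ be continuous. Then the compositions h^ν ∘ f epi-converge to h ∘ f. -/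
open Filter Topology

theorem epiConverges_comp_outer {n : ℕ}
    (h : ℝ → EReal) (hs : ℕ → ℝ → EReal) (f : (Fin n → ℝ) → ℝ)
    (hh : EpiConverges hs h)
    (hp : ∀ α : ℝ, Tendsto (fun ν => hs ν α) atTop (𝓝 (h α)))
    (hf : Continuous f) :
    EpiConverges (fun ν x => hs ν (f x)) (fun x => h (f x)) := by
  constructor
  · intro x u hu
    exact hh.1 (f x) (fun ν => f (u ν)) ((hf.tendsto x).comp hu)
  · intro x
    exact ⟨fun _ => x, tendsto_const_nhds, (hp (f x)).limsup_eq.le⟩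
end

section
/- Let f^ν, f : ℝⁿ → ℝ ∪ {±∞} with f^ν epi-converging to f, and let h : ℝ → ℝ be continuous and nondecreasing, extended to the extended reals by h(-∞) = inf_α h(α) and h(∞) = sup_α h(α). Then h ∘ f^ν epi-converges to h ∘ f. -/
open Filter Topology

theorem hbar_mono_cont
    (h : ℝ → ℝ) (hbar : EReal → EReal)
    (hcont : Continuous h) (hmono : Monotone h)
    (hreal : ∀ α : ℝ, hbar (α : EReal) = (h α : EReal))
    (hbot : hbar ⊥ = ⨅ α : ℝ, (h α : EReal))
    (htop : hbar ⊤ = ⨆ α : ℝ, (h α : EReal)) :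
    Monotone hbar ∧ Continuous hbar := by
  have key : ∀ y : EReal, hbar y ≤ ⨆ α : ℝ, (h α : EReal) := by
    intro y
    induction y using EReal.rec with
    | bot => rw [hbot]; exact le_trans (iInf_le (fun α : ℝ => (h α : EReal)) 0) (le_iSup (fun α : ℝ => (h α : EReal)) 0)
    | coe r => rw [hreal]; exact le_iSup (fun α : ℝ => (h α : EReal)) r
    | top => rw [htop]
  have key2 : ∀ y : EReal, (⨅ α : ℝ, (h α : EReal)) ≤ hbar y := by
    intro y
    induction y using EReal.rec with
    | bot => rw [hbot]
    | coe r => rw [hreal]; exact iInf_le (fun α : ℝ => (h α : EReal)) r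
    | top => rw [htop]; exact le_trans (iInf_le (fun α : ℝ => (h α : EReal)) 0) (le_iSup (fun α : ℝ => (h α : EReal)) 0)
  have hbarmono : Monotone hbar := by
    intro a b hab
    induction a using EReal.rec with
    | bot => rw [hbot]; exact key2 b
    | coe r =>
      induction b using EReal.rec with
      | bot => exact absurd hab (by simp)
      | coe s =>
        rw [hreal, hreal]
        exact_mod_cast hmono (by exact_mod_cast hab)
      | top => rw [htop]; exact le_trans (by rw [hreal]) (le_iSup (fun α : ℝ => (h α : EReal)) r)
    | top => rw [top_le_iff.mp hab]
  refine ⟨hbarmono, ?_⟩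
  rw [continuous_iff_continuousAt]
  intro a
  induction a using EReal.rec with
  | bot =>
    rw [ContinuousAt, hbot, tendsto_order]
    constructor
    · intro c hc
      filter_upwards with y
      exact lt_of_lt_of_le hc (key2 y)
    · intro c hc
      obtain ⟨α, hα⟩ := iInf_lt_iff.mp hc
      filter_upwards [Iio_mem_nhds (EReal.bot_lt_coe α)] with y hy
      calc hbar y ≤ hbar ↑α := hbarmono hy.le
        _ < c := by rw [hreal]; exact hα
  | coe r =>
    rw [ContinuousAt, EReal.nhds_coe, tendsto_map'_iff]
    have : (hbar ∘ fun x : ℝ => (x : EReal)) = fun x : ℝ => ((h x : ℝ) : EReal) := by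
      funext x; simp [Function.comp, hreal]
    rw [this, hreal]
    exact (continuous_coe_real_ereal.comp hcont).continuousAt
  | top =>
    rw [ContinuousAt, htop, tendsto_order]
    constructor
    · intro c hc
      obtain ⟨α, hα⟩ := lt_iSup_iff.mp hc
      filter_upwards [Ioi_mem_nhds (EReal.coe_lt_top α)] with y hy
      calc c < hbar ↑α := by rw [hreal]; exact hα
        _ ≤ hbar y := hbarmono hy.le
    · intro c hc
      filter_upwards with y
      exact lt_of_le_of_lt (key y) hc

theorem epiConverges_comp_inner {n : ℕ}
    (f : (Fin n → ℝ) → EReal) (fs : ℕ → (Fin n → ℝ) → EReal)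
    (h : ℝ → ℝ) (hbar : EReal → EReal)
    (hcont : Continuous h) (hmono : Monotone h)
    (hreal : ∀ α : ℝ, hbar (α : EReal) = (h α : EReal))
    (hbot : hbar ⊥ = ⨅ α : ℝ, (h α : EReal))
    (htop : hbar ⊤ = ⨆ α : ℝ, (h α : EReal))
    (hf : EpiConverges fs f) :
    EpiConverges (fun ν x => hbar (fs ν x)) (fun x => hbar (f x)) := by
  obtain ⟨hbarmono, hbarcont⟩ := hbar_mono_cont h hbar hcont hmono hreal hbot htop
  constructor
  · intro x u hu
    have h1 := hf.1 x u hu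
    have := hbarmono.map_liminf_of_continuousAt (F := atTop) (fun ν => fs ν (u ν))
      (hbarcont.continuousAt)
    calc hbar (f x) ≤ hbar (liminf (fun ν => fs ν (u ν)) atTop) := hbarmono h1
      _ = liminf (fun ν => hbar (fs ν (u ν))) atTop := this
  · intro x
    obtain ⟨u, hu, hle⟩ := hf.2 x
    refine ⟨u, hu, ?_⟩
    have := hbarmono.map_limsup_of_continuousAt (F := atTop) (fun ν => fs ν (u ν))
      (hbarcont.continuousAt)
    calc limsup (fun ν => hbar (fs ν (u ν))) atTop
        = hbar (limsup (fun ν => fs ν (u ν)) atTop) := this.symm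
      _ ≤ hbar (f x) := hbarmono hle
end

section
/- Let f, f^ν : ℝⁿ → ℝ ∪ {±∞} be proper functions with f^ν epi-converging to f, and let ε^ν ≥ 0 with ε^ν → 0. Then every cluster point of a sequence x^ν ∈ ε^ν-argmin f^ν belongs to argmin f; i.e., LimOut(ε^ν-argmin f^ν) ⊆ argmin f. -/
open Filter Topology

/-- ε-argmin of an extended-real-valued function. -/
def EpsArgmin {α : Type*} (f : α → EReal) (ε : ℝ) : Set α :=
  {x | f x ≤ (⨅ y, f y) + (ε : EReal) ∧ f x < ⊤}

private lemma ereal_le_of_forall_add (a b : EReal)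
    (h : ∀ δ : ℝ, 0 < δ → a ≤ b + (δ : EReal)) : a ≤ b := by
  by_contra hab
  push_neg at hab
  obtain ⟨c, hbc, hca⟩ := EReal.exists_between_coe_real hab
  induction b with
  | bot =>
      have h1 := h 1 one_pos
      rw [EReal.bot_add] at h1
      exact absurd (h1.trans_lt hab) (lt_irrefl _)
  | coe r =>
      have hrc : r < c := by exact_mod_cast hbc
      have h1 := h (c - r) (by linarith)
      rw [← EReal.coe_add, show r + (c - r) = c by ring] at h1
      exact absurd (hca.trans_le h1) (lt_irrefl _)
  | top => exact not_top_lt hab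

theorem limOut_epsArgmin_subset_argmin {n : ℕ}
    (f : (Fin n → ℝ) → EReal) (fs : ℕ → (Fin n → ℝ) → EReal)
    (hfproper : (∀ x, f x ≠ ⊥) ∧ (∃ x, f x ≠ ⊤))
    (hfsproper : ∀ ν, (∀ x, fs ν x ≠ ⊥) ∧ (∃ x, fs ν x ≠ ⊤))
    (hconv : EpiConverges fs f)
    (ε : ℕ → ℝ) (hε : ∀ ν, 0 ≤ ε ν) (hε0 : Tendsto ε atTop (𝓝 0)) :
    LimOut (fun ν => EpsArgmin (fs ν) (ε ν)) ⊆
      {x | f x = (⨅ y, f y) ∧ f x < ⊤} := by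
  rintro x ⟨N, hN, u, hu, hux⟩
  have hNtop : Tendsto N atTop atTop := hN.tendsto_atTop
  classical
  set v : ℕ → (Fin n → ℝ) := fun ν => if h : ∃ k, N k = ν then u h.choose else x with hv
  have hvN : ∀ k, v (N k) = u k := by
    intro k
    have h : ∃ k', N k' = N k := ⟨k, rfl⟩
    have hk : h.choose = k := hN.injective h.choose_spec
    simp [hv, dif_pos h, hk]
  have hvx : Tendsto v atTop (𝓝 x) := by
    rw [tendsto_atTop'] at hux ⊢
    intro s hs
    obtain ⟨K, hK⟩ := hux s hs
    refine ⟨N K, fun ν hν => ?_⟩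
    by_cases h : ∃ k, N k = ν
    · have hk : N h.choose = ν := h.choose_spec
      have hKk : K ≤ h.choose := by
        by_contra hlt
        push_neg at hlt
        have := hN hlt
        omega
      simp only [hv, dif_pos h]
      exact hK _ hKk
    · simp only [hv, dif_neg h]
      exact mem_of_mem_nhds hs
  have key : ∀ y, f x ≤ f y := by
    intro y
    refine ereal_le_of_forall_add _ _ fun δ hδ => ?_
    obtain ⟨w, hwy, hws⟩ := hconv.2 y
    have h1 : f x ≤ liminf (fun ν => fs ν (v ν)) atTop := hconv.1 x v hvx
    have h2 : liminf (fun ν => fs ν (v ν)) atTop ≤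
        liminf (fun k => fs (N k) (u k)) atTop := by
      have hsub : liminf (fun ν => fs ν (v ν)) atTop ≤
          liminf (fun ν => fs ν (v ν)) (map N atTop) :=
        liminf_le_liminf_of_le hNtop
      rw [← liminf_comp] at hsub
      refine hsub.trans_eq (liminf_congr ?_)
      filter_upwards with k
      simp [Function.comp, hvN]
    have h3 : liminf (fun k => fs (N k) (u k)) atTop ≤
        limsup (fun k => fs (N k) (w (N k)) + (δ : EReal)) atTop := by
      have hll : liminf (fun k => fs (N k) (u k)) atTop ≤
          limsup (fun k => fs (N k) (u k)) atTop := liminf_le_limsup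
      refine hll.trans (limsup_le_limsup ?_)
      have hεN : Tendsto (fun k => ε (N k)) atTop (𝓝 0) := hε0.comp hNtop
      have hev : ∀ᶠ k in atTop, ε (N k) ≤ δ := hεN.eventually (eventually_le_nhds hδ)
      filter_upwards [hev] with k hk
      have h5 : fs (N k) (u k) ≤ (⨅ z, fs (N k) z) + (ε (N k) : EReal) := (hu k).1
      exact h5.trans (add_le_add (iInf_le _ _) (by exact_mod_cast hk))
    have h4 : limsup (fun k => fs (N k) (w (N k)) + (δ : EReal)) atTop ≤ f y + δ := by
      have hadd := EReal.limsup_add_le (f := atTop)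
        (u := fun k => fs (N k) (w (N k))) (v := fun _ => (δ : EReal))
        (Or.inr (by rw [limsup_const]; exact EReal.coe_ne_top δ))
        (Or.inr (by rw [limsup_const]; exact EReal.coe_ne_bot δ))
      have hsub : limsup (fun k => fs (N k) (w (N k))) atTop ≤ f y := by
        refine le_trans ?_ hws
        have := limsup_le_limsup_of_le (f := map N atTop) (g := atTop)
          (u := fun ν => fs ν (w ν)) hNtop
        rw [← limsup_comp] at this
        exact this
      calc limsup (fun k => fs (N k) (w (N k)) + (δ : EReal)) atTop
          ≤ limsup (fun k => fs (N k) (w (N k))) atTop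
              + limsup (fun _ : ℕ => (δ : EReal)) atTop := hadd
        _ = limsup (fun k => fs (N k) (w (N k))) atTop + δ := by rw [limsup_const]
        _ ≤ f y + δ := add_le_add_left hsub _
    exact h1.trans (h2.trans (h3.trans h4))
  obtain ⟨y₀, hy₀⟩ := hfproper.2
  exact ⟨le_antisymm (le_iInf key) (iInf_le _ _),
    lt_of_le_of_lt (key y₀) (lt_top_iff_ne_top.2 hy₀)⟩
end

section
/- Let f, f^ν : ℝⁿ → ℝ ∪ {±∞} be proper with f^ν epi-converging to f. If a sequence of minimizers x^ν ∈ argmin f^ν converges along a subsequence indexed by N, then inf f^ν → inf f along N. -/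
open Filter Topology

theorem inf_tendsto_along_convergent_minimizers {n : ℕ}
    (f : (Fin n → ℝ) → EReal) (fs : ℕ → (Fin n → ℝ) → EReal)
    (hfproper : (∀ x, f x ≠ ⊥) ∧ (∃ x, f x ≠ ⊤))
    (hfsproper : ∀ ν, (∀ x, fs ν x ≠ ⊥) ∧ (∃ x, fs ν x ≠ ⊤))
    (hconv : EpiConverges fs f)
    (x : ℕ → (Fin n → ℝ))
    (hmin : ∀ ν, fs ν (x ν) = (⨅ y, fs ν y) ∧ fs ν (x ν) < ⊤)
    (N : ℕ → ℕ) (hN : StrictMono N)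
    (hconvx : ∃ xbar, Tendsto (fun k => x (N k)) atTop (𝓝 xbar)) :
    Tendsto (fun k => ⨅ y, fs (N k) y) atTop (𝓝 (⨅ y, f y)) := by
  classical
  obtain ⟨xbar, hx⟩ := hconvx
  set g : ℕ → EReal := fun ν => ⨅ y, fs ν y with hg
  have hNtop : Tendsto N atTop atTop := hN.tendsto_atTop
  have hmapN : map N atTop ≤ atTop := hNtop
  -- upper bound: limsup g atTop ≤ inf f
  have hup : limsup g atTop ≤ ⨅ y, f y := by
    apply le_iInf
    intro y
    obtain ⟨u, _, hlim⟩ := hconv.2 y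
    refine le_trans ?_ hlim
    exact limsup_le_limsup (Eventually.of_forall fun ν => iInf_le _ (u ν))
  have hupN : limsup (fun k => g (N k)) atTop ≤ ⨅ y, f y := by
    have : limsup (fun k => g (N k)) atTop = limsup g (map N atTop) := by
      simp [Filter.limsup, Filter.map_map]; rfl
    rw [this]
    exact le_trans (limsup_le_limsup_of_le hmapN) hup
  -- lower bound via the recovery sequence
  set u : ℕ → (Fin n → ℝ) := fun ν => if ∃ k, N k = ν then x ν else xbar with hu
  have huN : ∀ k, u (N k) = x (N k) := by
    intro k; simp only [hu]; rw [if_pos ⟨k, rfl⟩]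
  have hutend : Tendsto u atTop (𝓝 xbar) := by
    intro U hU
    have hxU := hx hU
    rw [mem_map, mem_atTop_sets] at hxU ⊢
    obtain ⟨K, hK⟩ := hxU
    refine ⟨N K, fun ν hν => ?_⟩
    simp only [Set.mem_preimage, hu]
    split_ifs with h
    · obtain ⟨k, rfl⟩ := h
      exact hK k (hN.le_iff_le.mp hν)
    · exact mem_of_mem_nhds hU
  have hlow : f xbar ≤ liminf (fun k => g (N k)) atTop := by
    have h1 := hconv.1 xbar u hutend
    have h2 : liminf (fun ν => fs ν (u ν)) atTop ≤
        liminf (fun k => fs (N k) (u (N k))) atTop := by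
      have : liminf (fun k => fs (N k) (u (N k))) atTop =
          liminf (fun ν => fs ν (u ν)) (map N atTop) := by
        simp [Filter.liminf, Filter.map_map]; rfl
      rw [this]
      exact liminf_le_liminf_of_le hmapN
    have h3 : (fun k => fs (N k) (u (N k))) = fun k => g (N k) := by
      funext k; rw [huN k, (hmin (N k)).1]
    calc f xbar ≤ liminf (fun ν => fs ν (u ν)) atTop := h1
      _ ≤ liminf (fun k => fs (N k) (u (N k))) atTop := h2
      _ = liminf (fun k => g (N k)) atTop := by rw [h3]
  have hinf_le : (⨅ y, f y) ≤ liminf (fun k => g (N k)) atTop :=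
    le_trans (iInf_le _ xbar) hlow
  exact tendsto_of_le_liminf_of_limsup_le hinf_le hupN
end

section
/- Let f, f^ν : ℝⁿ → ℝ ∪ {±∞} be proper with f^ν epi-converging to f and inf f^ν → inf f. Then for every ε > 0, argmin f ⊆ LimInn(ε-argmin f^ν); i.e., every minimizer of f is the limit of points x^ν with f^ν(x^ν) ≤ inf f^ν + ε. -/
open Filter Topology

theorem argmin_subset_limInn_epsArgmin {n : ℕ}
    (f : (Fin n → ℝ) → EReal) (fs : ℕ → (Fin n → ℝ) → EReal)
    (hfproper : (∀ x, f x ≠ ⊥) ∧ (∃ x, f x ≠ ⊤))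
    (hfsproper : ∀ ν, (∀ x, fs ν x ≠ ⊥) ∧ (∃ x, fs ν x ≠ ⊤))
    (hconv : EpiConverges fs f)
    (hinf : Tendsto (fun ν => ⨅ y, fs ν y) atTop (𝓝 (⨅ y, f y))) :
    ∀ ε : ℝ, 0 < ε →
      {x | f x = (⨅ y, f y) ∧ f x < ⊤} ⊆
        LimInn (fun ν => EpsArgmin (fs ν) ε) := by
  intro ε hε x hx
  obtain ⟨hxmin, hxtop⟩ := hx
  set m : EReal := ⨅ y, f y with hm
  have hmne_top : m ≠ ⊤ := hxmin ▸ hxtop.ne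
  have hmne_bot : m ≠ ⊥ := hxmin ▸ hfproper.1 x
  set a : ℝ := m.toReal with ha
  have hma : ((a : EReal)) = m := EReal.coe_toReal hmne_top hmne_bot
  obtain ⟨u, hu, hlimsup⟩ := hconv.2 x
  refine ⟨u, ?_, hu⟩
  have h1 : ∀ᶠ ν in atTop, fs ν (u ν) < ((a + ε/2 : ℝ) : EReal) := by
    refine eventually_lt_of_limsup_lt ?_ (isBoundedUnder_of ⟨⊤, fun ν => le_top⟩)
    apply lt_of_le_of_lt hlimsup
    rw [hxmin, ← hma]
    exact_mod_cast (by linarith : a < a + ε/2)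
  have h2 : ∀ᶠ ν in atTop, ((a - ε/2 : ℝ) : EReal) < ⨅ y, fs ν y := by
    apply hinf.eventually (eventually_gt_nhds ?_)
    rw [← hma]
    exact_mod_cast (by linarith : a - ε/2 < a)
  filter_upwards [h1, h2] with ν h1 h2
  have hlt : fs ν (u ν) < (⨅ y, fs ν y) + (ε : EReal) := by
    refine lt_of_lt_of_le h1 ?_
    calc ((a + ε/2 : ℝ) : EReal) = ((a - ε/2 : ℝ) : EReal) + (ε : EReal) := by
          norm_cast; ring
      _ ≤ (⨅ y, fs ν y) + (ε : EReal) := by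
          exact add_le_add h2.le le_rfl
  exact ⟨hlt.le, lt_of_lt_of_le h1 le_top⟩
end

section
/- Let S, S^ν : ℝⁿ ⇉ ℝᵐ with LimOut(gph S^ν) ⊆ gph S, let ε^ν ≥ 0 with ε^ν → 0, and ȳ ∈ ℝᵐ. Then LimOut((S^ν)⁻¹(B(ȳ, ε^ν))) ⊆ S⁻¹(ȳ): every cluster point of points x^ν satisfying dist(ȳ, S^ν(x^ν)) ≤ ε^ν (more precisely, y^ν ∈ S^ν(x^ν) with ‖y^ν − ȳ‖ ≤ ε^ν) solves ȳ ∈ S(x). -/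
open Filter Topology

/-- Graph of a set-valued mapping. -/
def Gph {α β : Type*} (S : α → Set β) : Set (α × β) := {p | p.2 ∈ S p.1}

/-- Outer semicontinuity of a set-valued mapping at every point:
all cluster points of values along converging arguments belong to the value. -/
def Osc {α β : Type*} [TopologicalSpace α] [TopologicalSpace β] (S : α → Set β) : Prop :=
  ∀ (xbar : α) (x : ℕ → α), Tendsto x atTop (𝓝 xbar) →
    LimOut (fun ν => S (x ν)) ⊆ S xbar
theorem limOut_approx_solutions_subset {n m : ℕ}
    (S : (Fin n → ℝ) → Set (Fin m → ℝ)) (Ss : ℕ → (Fin n → ℝ) → Set (Fin m → ℝ))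
    (hgraph : LimOut (fun ν => Gph (Ss ν)) ⊆ Gph S)
    (ε : ℕ → ℝ) (hε : ∀ ν, 0 ≤ ε ν) (hε0 : Tendsto ε atTop (𝓝 0))
    (ybar : Fin m → ℝ) :
    LimOut (fun ν => {x | ∃ y ∈ Ss ν x, ‖y - ybar‖ ≤ ε ν}) ⊆ {x | ybar ∈ S x} := by
  rintro xbar ⟨N, hN, u, hu, hux⟩
  choose y hy hyb using hu
  have hεN : Tendsto (fun k => ε (N k)) atTop (𝓝 0) :=
    hε0.comp hN.tendsto_atTop
  have hyten : Tendsto y atTop (𝓝 ybar) := by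
    have : Tendsto (fun k => y k - ybar) atTop (𝓝 0) := by
      rw [tendsto_zero_iff_norm_tendsto_zero]
      exact squeeze_zero (fun k => norm_nonneg _) hyb hεN
    simpa using this.add_const ybar
  exact hgraph ⟨N, hN, fun k => (u k, y k), hy, hux.prodMk_nhds hyten⟩
end

section
/- Let S, S^ν : ℝⁿ ⇉ ℝᵐ with gph S ⊆ LimInn(gph S^ν), and ȳ ∈ ℝᵐ. Then there exist ε^ν ≥ 0 with ε^ν → 0 such that S⁻¹(ȳ) ⊆ LimInn((S^ν)⁻¹(B(ȳ, ε^ν))): every solution of ȳ ∈ S(x) is the limit of ε^ν-solutions of the approximating generalized equations. -/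
open Filter Topology

lemma inv_succ_tendsto : Tendsto (fun k : ℕ => ((k:ℝ)+1)⁻¹) atTop (𝓝 0) := by
  have := tendsto_one_div_add_atTop_nhds_zero_nat (𝕜 := ℝ)
  simpa [one_div] using this

/-- Diagonalization helper. -/
lemma diag_aux (M : ℕ → ℕ) :
    ∃ K : ℕ → ℕ, Tendsto K atTop atTop ∧ ∀ᶠ ν in atTop, M (K ν) ≤ ν := by
  classical
  set N : ℕ → ℕ := fun k => k + (Finset.range (k+1)).sup M with hN
  have hNk : ∀ k, k ≤ N k := fun k => Nat.le_add_right _ _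
  have hMN : ∀ k, M k ≤ N k := fun k =>
    le_trans (Finset.le_sup (Finset.self_mem_range_succ k)) (Nat.le_add_left _ _)
  refine ⟨fun ν => Nat.findGreatest (fun k => N k ≤ ν) ν, ?_, ?_⟩
  · refine tendsto_atTop.2 fun b => ?_
    filter_upwards [eventually_ge_atTop (N b)] with ν hν
    exact Nat.le_findGreatest (le_trans (hNk b) hν) hν
  · filter_upwards [eventually_ge_atTop (N 0)] with ν hν
    have hP : N (Nat.findGreatest (fun k => N k ≤ ν) ν) ≤ ν :=
      Nat.findGreatest_spec (P := fun k => N k ≤ ν) (m := 0) (Nat.zero_le ν) hν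
    exact le_trans (hMN _) hP

lemma isClosed_limInn {E : Type*} [PseudoMetricSpace E] (A : ℕ → Set E) :
    IsClosed (LimInn A) := by
  refine isClosed_of_closure_subset fun x hx => ?_
  have hz : ∀ j : ℕ, ∃ z ∈ LimInn A, dist x z < ((j:ℝ)+1)⁻¹ := fun j =>
    Metric.mem_closure_iff.1 hx _ (by positivity)
  choose z hzL hzd using hz
  choose u hu hut using hzL
  have hev : ∀ j : ℕ, ∀ᶠ ν in atTop, u j ν ∈ A ν ∧ dist (u j ν) (z j) ≤ ((j:ℝ)+1)⁻¹ := by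
    intro j
    have h2 : ∀ᶠ ν in atTop, dist (u j ν) (z j) ≤ ((j:ℝ)+1)⁻¹ := by
      have := (hut j).eventually (Metric.closedBall_mem_nhds (z j) (show (0:ℝ) < ((j:ℝ)+1)⁻¹ by positivity))
      simpa [Metric.mem_closedBall] using this
    exact (hu j).and h2
  have hM : ∀ j : ℕ, ∃ M : ℕ, ∀ ν ≥ M, u j ν ∈ A ν ∧ dist (u j ν) (z j) ≤ ((j:ℝ)+1)⁻¹ :=
    fun j => eventually_atTop.1 (hev j)
  choose M hMspec using hM
  obtain ⟨K, hKtop, hKM⟩ := diag_aux M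
  refine ⟨fun ν => u (K ν) ν, ?_, ?_⟩
  · filter_upwards [hKM] with ν hν
    exact (hMspec (K ν) ν hν).1
  · rw [tendsto_iff_dist_tendsto_zero]
    have hb : ∀ᶠ ν in atTop, dist (u (K ν) ν) x ≤ ((K ν:ℝ)+1)⁻¹ + ((K ν:ℝ)+1)⁻¹ := by
      filter_upwards [hKM] with ν hν
      calc dist (u (K ν) ν) x ≤ dist (u (K ν) ν) (z (K ν)) + dist (z (K ν)) x :=
            dist_triangle _ _ _
        _ ≤ ((K ν:ℝ)+1)⁻¹ + ((K ν:ℝ)+1)⁻¹ := by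
            have h1 := (hMspec (K ν) ν hν).2
            have h2 := (hzd (K ν)).le
            rw [dist_comm] at h2
            linarith
    have hto : Tendsto (fun ν => ((K ν:ℝ)+1)⁻¹ + ((K ν:ℝ)+1)⁻¹) atTop (𝓝 0) := by
      have := (inv_succ_tendsto.comp hKtop)
      simpa using this.add this
    exact squeeze_zero' (Eventually.of_forall fun ν => dist_nonneg) hb hto


theorem solutions_subset_limInn_approx {n m : ℕ}
    (S : (Fin n → ℝ) → Set (Fin m → ℝ)) (Ss : ℕ → (Fin n → ℝ) → Set (Fin m → ℝ))
    (hgraph : Gph S ⊆ LimInn (fun ν => Gph (Ss ν)))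
    (ybar : Fin m → ℝ) :
    ∃ ε : ℕ → ℝ, (∀ ν, 0 ≤ ε ν) ∧ Tendsto ε atTop (𝓝 0) ∧
      {x | ybar ∈ S x} ⊆
        LimInn (fun ν => {x | ∃ y ∈ Ss ν x, ‖y - ybar‖ ≤ ε ν}) := by
  classical
  obtain ⟨c, hcT, hcc, hTc⟩ :=
    (TopologicalSpace.IsSeparable.of_separableSpace
      {x | ybar ∈ S x}).exists_countable_dense_subset
  rcases c.eq_empty_or_nonempty with hce | hcne
  · refine ⟨fun _ => 0, fun _ => le_refl 0, tendsto_const_nhds, fun x hx => ?_⟩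
    exact absurd (hTc hx) (by simp [hce])
  · obtain ⟨f, hf⟩ := Set.Countable.exists_eq_range hcc hcne
    have hfT : ∀ k, ybar ∈ S (f k) := fun k => hcT (hf ▸ Set.mem_range_self k)
    have hg : ∀ k, (f k, ybar) ∈ LimInn (fun ν => Gph (Ss ν)) := fun k => hgraph (hfT k)
    choose p hp hpt using hg
    have hδ : ∀ k, Tendsto (fun ν => ‖(p k ν).2 - ybar‖) atTop (𝓝 0) := by
      intro k
      have h2 : Tendsto (fun ν => (p k ν).2) atTop (𝓝 ybar) :=
        (continuous_snd.tendsto _).comp (hpt k)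
      have h3 : Tendsto (fun ν => (p k ν).2 - ybar) atTop (𝓝 (ybar - ybar)) :=
        h2.sub (tendsto_const_nhds (x := ybar))
      rw [sub_self] at h3
      simpa using h3.norm
    have hev : ∀ k : ℕ, ∀ᶠ ν in atTop,
        ∀ j ∈ Finset.range (k+1),
          (p j ν ∈ Gph (Ss ν) ∧ ‖(p j ν).2 - ybar‖ ≤ ((k:ℝ)+1)⁻¹) := by
      intro k
      refine (Finset.range (k+1)).eventually_all.2 fun j _ => ?_
      refine (hp j).and ?_
      have := (hδ j).eventually_lt_const (show (0:ℝ) < ((k:ℝ)+1)⁻¹ by positivity)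
      filter_upwards [this] with ν hν using hν.le
    choose M hM using fun k => eventually_atTop.1 (hev k)
    obtain ⟨K, hKtop, hKM⟩ := diag_aux M
    refine ⟨fun ν => ((K ν : ℝ)+1)⁻¹, fun ν => by positivity,
      inv_succ_tendsto.comp hKtop, ?_⟩
    set A : ℕ → Set (Fin n → ℝ) :=
      fun ν => {x | ∃ y ∈ Ss ν x, ‖y - ybar‖ ≤ ((K ν:ℝ)+1)⁻¹} with hA
    have hcA : c ⊆ LimInn A := by
      rw [hf]; rintro _ ⟨k, rfl⟩
      refine ⟨fun ν => (p k ν).1, ?_, (continuous_fst.tendsto _).comp (hpt k)⟩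
      filter_upwards [hKM, hKtop.eventually_ge_atTop k] with ν h1 h2
      obtain ⟨hmem, hle⟩ := hM (K ν) ν h1 k (Finset.mem_range_succ_iff.2 h2)
      exact ⟨(p k ν).2, hmem, hle⟩
    calc {x | ybar ∈ S x} ⊆ closure c := hTc
      _ ⊆ closure (LimInn A) := closure_mono hcA
      _ = LimInn A := (isClosed_limInn A).closure_eq
end

section
/- Let f, g : ℝⁿ → ℝ ∪ {±∞}, ε, ρ ≥ 0, and suppose inf f, inf g ∈ [−ρ, ρ−ε), argmin f ∩ B(0,ρ) ≠ ∅, and argmin g ∩ B(0,ρ) ≠ ∅. Then |inf f − inf g| ≤ dl_ρ(epi f, epi g), where dl_ρ is the truncated Hausdorff distance between the epigraphs computed with the product norm max{‖x‖, |α|} on ℝⁿ×ℝ. -/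
open Filter Topology ENNReal

/-- Epigraph of an extended-real-valued function, as a subset of the product space
`(Fin n → ℝ) × ℝ`, whose norm is `max {‖x‖, |α|}`. -/
def Epi {n : ℕ} (f : (Fin n → ℝ) → EReal) : Set ((Fin n → ℝ) × ℝ) :=
  {p | f p.1 ≤ (p.2 : EReal)}

/-- The excess of `C` over `D`: `sup_{z ∈ C} dist(z, D)` (in `ℝ≥0∞`, so it is `0`
when `C = ∅` and `∞` when `C ≠ ∅` and `D = ∅`). -/
noncomputable def Exs {α : Type*} [PseudoEMetricSpace α] (C D : Set α) : ℝ≥0∞ :=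
  ⨆ z ∈ C, EMetric.infEdist z D

/-- The truncated Hausdorff distance between `C` and `D` with truncation radius `ρ`. -/
noncomputable def TruncHausdorff {α : Type*} [SeminormedAddGroup α]
    (ρ : ℝ) (C D : Set α) : ℝ≥0∞ :=
  max (Exs (C ∩ Metric.closedBall 0 ρ) D) (Exs (D ∩ Metric.closedBall 0 ρ) C)

lemma key_exs {n : ℕ} (f g : (Fin n → ℝ) → EReal) (ρ a b : ℝ)
    (hA : (⨅ x, f x) = (a : EReal)) (hB : (⨅ x, g x) = (b : EReal))
    (ha1 : -ρ ≤ a) (ha2 : a ≤ ρ)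
    (hfargmin : ∃ x : Fin n → ℝ, ‖x‖ ≤ ρ ∧ f x = ⨅ y, f y) :
    ENNReal.ofReal (b - a) ≤ Exs (Epi f ∩ Metric.closedBall 0 ρ) (Epi g) := by
  obtain ⟨x, hx, hxmin⟩ := hfargmin
  set z : (Fin n → ℝ) × ℝ := (x, a) with hzdef
  have hz : z ∈ Epi f ∩ Metric.closedBall 0 ρ := by
    constructor
    · show f x ≤ (a : EReal)
      rw [hxmin, hA]
    · rw [Metric.mem_closedBall, dist_zero_right, Prod.norm_def]
      simp only [hzdef]
      exact max_le hx (abs_le.2 ⟨ha1, ha2⟩)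
  have h1 : ENNReal.ofReal (b - a) ≤ EMetric.infEdist z (Epi g) := by
    refine le_iInf₂ fun w hw => ?_
    have hbw : b ≤ w.2 := by
      have h : (b : EReal) ≤ (w.2 : EReal) := hB ▸ le_trans (iInf_le _ w.1) hw
      exact_mod_cast h
    calc ENNReal.ofReal (b - a) ≤ edist (a : ℝ) w.2 := by
          rw [edist_dist, Real.dist_eq]
          exact ENNReal.ofReal_le_ofReal (by rw [abs_sub_comm]; exact le_trans (by linarith) (le_abs_self _))
      _ ≤ edist z w := by rw [Prod.edist_eq]; exact le_max_right _ _
  exact le_trans h1 (le_iSup₂ (f := fun z _ => EMetric.infEdist z (Epi g)) z hz)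

theorem abs_inf_sub_inf_le_truncHausdorff {n : ℕ}
    (f g : (Fin n → ℝ) → EReal) (ε ρ : ℝ) (hε : 0 ≤ ε) (hρ : 0 ≤ ρ)
    (hfinf₁ : ((-ρ : ℝ) : EReal) ≤ ⨅ x, f x) (hfinf₂ : (⨅ x, f x) < ((ρ - ε : ℝ) : EReal))
    (hginf₁ : ((-ρ : ℝ) : EReal) ≤ ⨅ x, g x) (hginf₂ : (⨅ x, g x) < ((ρ - ε : ℝ) : EReal))
    (hfargmin : ∃ x : Fin n → ℝ, ‖x‖ ≤ ρ ∧ f x = ⨅ y, f y)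
    (hgargmin : ∃ x : Fin n → ℝ, ‖x‖ ≤ ρ ∧ g x = ⨅ y, g y) :
    EReal.abs ((⨅ x, f x) - ⨅ x, g x) ≤ TruncHausdorff ρ (Epi f) (Epi g) := by
  have hfb : (⊥ : EReal) < ⨅ x, f x := lt_of_lt_of_le (EReal.bot_lt_coe _) hfinf₁
  have hgb : (⊥ : EReal) < ⨅ x, g x := lt_of_lt_of_le (EReal.bot_lt_coe _) hginf₁
  set a := (⨅ x, f x).toReal with hadef
  set b := (⨅ x, g x).toReal with hbdef
  have hA : (⨅ x, f x) = (a : EReal) :=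
    (EReal.coe_toReal (ne_top_of_lt hfinf₂) hfb.ne').symm
  have hB : (⨅ x, g x) = (b : EReal) :=
    (EReal.coe_toReal (ne_top_of_lt hginf₂) hgb.ne').symm
  have ha1 : -ρ ≤ a := by exact_mod_cast hA ▸ hfinf₁
  have hb1 : -ρ ≤ b := by exact_mod_cast hB ▸ hginf₁
  have ha2 : a ≤ ρ := by
    have : (a : EReal) < ((ρ - ε : ℝ) : EReal) := hA ▸ hfinf₂
    have := EReal.coe_lt_coe_iff.1 this
    linarith
  have hb2 : b ≤ ρ := by
    have : (b : EReal) < ((ρ - ε : ℝ) : EReal) := hB ▸ hginf₂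
    have := EReal.coe_lt_coe_iff.1 this
    linarith
  rw [hA, hB, ← EReal.coe_sub, EReal.abs_def]
  rcases le_total a b with hab | hab
  · have h := key_exs f g ρ a b hA hB ha1 ha2 hfargmin
    refine le_trans ?_ (le_max_left _ _)
    rwa [abs_of_nonpos (by linarith), neg_sub]
  · have h := key_exs g f ρ b a hB hA hb1 hb2 hgargmin
    refine le_trans ?_ (le_max_right _ _)
    rwa [abs_of_nonneg (by linarith)]
end
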